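/- For the class of directed rooted trees with exactly k-1 leaves, dissemination completes within k(n-3)+2 rounds. -/

import Mathlib

open Relation

/-- Influence sets: `influence G p r` is the set of processes that know
about `p` at the end of round `r`, where `G r` is the round-`r`
communication graph (edges `G r q q'` mean `q` sends to `q'`). -/
def influence {n : ℕ} (G : ℕ → Fin n → Fin n → Prop) (p : Fin n) : ℕ → Set (Fin n)
  | 0 => {p}
  | r + 1 => influence G p r ∪ {q' | ∃ q ∈ influence G p r, G (r + 1) q q'}

/-- `E` is a directed tree on `Fin n` rooted at `root`, edges oriented away
from the root: every node is reachable from the root, every non-root node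
has a unique parent, and the root has no parent. -/
def IsRootedTree {n : ℕ} (E : Fin n → Fin n → Prop) (root : Fin n) : Prop :=
  (∀ v, Relation.ReflTransGen E root v) ∧
  (∀ v, v ≠ root → ∃! u, E u v) ∧
  (∀ u, ¬ E u root)

/-- A leaf of a directed graph: a node with no outgoing edge. -/
def IsLeaf {n : ℕ} (E : Fin n → Fin n → Prop) (v : Fin n) : Prop := ∀ w, ¬ E v w

/-- The successor relation of the chain `σ 0 → σ 1 → ⋯ → σ (n-1)`. -/
def chainEdge {n : ℕ} (σ : Fin n ≃ Fin n) (u v : Fin n) : Prop :=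
  ∃ i j : Fin n, (j : ℕ) = (i : ℕ) + 1 ∧ u = σ i ∧ v = σ j

/-- `E` is a directed chain (rooted path) on all `n` nodes. -/
def IsDirChain {n : ℕ} (E : Fin n → Fin n → Prop) : Prop :=
  ∃ σ : Fin n ≃ Fin n, ∀ u v, E u v ↔ chainEdge σ u v

/-- `E` is an undirected path on all `n` nodes (messages traverse edges in
both directions). -/
def IsUndirPath {n : ℕ} (E : Fin n → Fin n → Prop) : Prop :=
  ∃ σ : Fin n ≃ Fin n, ∀ u v, E u v ↔ (chainEdge σ u v ∨ chainEdge σ v u)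

/-- The influence sets indexed by `I` cover `Π` at time `r`. -/
def isCovering {n : ℕ} (G : ℕ → Fin n → Fin n → Prop) (I : Set (Fin n)) (r : ℕ) : Prop :=
  ⋃ p ∈ I, influence G p r = Set.univ

/-- A strict covering: no member can be removed. -/
def isStrictCovering {n : ℕ} (G : ℕ → Fin n → Fin n → Prop) (I : Set (Fin n)) (r : ℕ) : Prop :=
  isCovering G I r ∧ ∀ p ∈ I, ¬ isCovering G (I \ {p}) r

/-! ### Auxiliary development -/

section Aux

attribute [local instance] Classical.propDecidable

variable {n : ℕ}

lemma influence_zero (G : ℕ → Fin n → Fin n → Prop) (p : Fin n) :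
    influence G p 0 = {p} := rfl

lemma influence_succ (G : ℕ → Fin n → Fin n → Prop) (p : Fin n) (r : ℕ) :
    influence G p (r + 1) = influence G p r ∪ {q' | ∃ q ∈ influence G p r, G (r + 1) q q'} := rfl

lemma influence_subset_succ (G : ℕ → Fin n → Fin n → Prop) (p : Fin n) (r : ℕ) :
    influence G p r ⊆ influence G p (r + 1) := fun _ hx => Or.inl hx

lemma influence_mono (G : ℕ → Fin n → Fin n → Prop) (p : Fin n) {r s : ℕ} (h : r ≤ s) :
    influence G p r ⊆ influence G p s := by
  induction s, h using Nat.le_induction with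
  | base => exact subset_rfl
  | succ s _ ih => exact ih.trans (influence_subset_succ G p s)

lemma mem_influence_self (G : ℕ → Fin n → Fin n → Prop) (p : Fin n) (r : ℕ) :
    p ∈ influence G p r :=
  influence_mono G p (Nat.zero_le r) rfl

/-! ### Rooted tree facts -/

/-- There is an `E`-path of length `m` from `root` to `v`. -/
def hasPath (E : Fin n → Fin n → Prop) (root v : Fin n) (m : ℕ) : Prop :=
  ∃ f : ℕ → Fin n, f 0 = root ∧ f m = v ∧ ∀ i < m, E (f i) (f (i + 1))

lemma reach_hasPath {E : Fin n → Fin n → Prop} {root v : Fin n}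
    (h : ReflTransGen E root v) : ∃ m, hasPath E root v m := by
  induction h with
  | refl => exact ⟨0, fun _ => root, rfl, rfl, fun i hi => absurd hi (by omega)⟩
  | @tail b c hab hbc ih =>
    obtain ⟨m, f, h0, hm, hstep⟩ := ih
    refine ⟨m + 1, fun i => if i ≤ m then f i else c, by simp [h0], by simp, ?_⟩
    intro i hi
    rcases Nat.lt_or_ge i m with h | h
    · simpa [Nat.le_of_lt h, Nat.succ_le_of_lt h] using hstep i h
    · have him : i = m := by omega
      subst him
      simpa [hm] using hbc

noncomputable def ht {E : Fin n → Fin n → Prop} {root : Fin n}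
    (hE : IsRootedTree E root) (v : Fin n) : ℕ :=
  Nat.find (reach_hasPath (hE.1 v))

lemma ht_edge {E : Fin n → Fin n → Prop} {root : Fin n}
    (hE : IsRootedTree E root) {u v : Fin n} (h : E u v) : ht hE v = ht hE u + 1 := by
  have hvroot : v ≠ root := fun hv => hE.2.2 u (hv ▸ h)
  unfold ht
  obtain ⟨f, h0, hmv, hstep⟩ := Nat.find_spec (reach_hasPath (hE.1 v))
  set m := Nat.find (reach_hasPath (hE.1 v)) with hm
  have hm0 : m ≠ 0 := by
    intro h0'
    exact hvroot (by rw [← hmv, h0', h0])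
  have hlast : E (f (m - 1)) v := by
    have h1 := hstep (m - 1) (by omega)
    have h2 : m - 1 + 1 = m := by omega
    rwa [h2, hmv] at h1
  obtain ⟨u', hu', huniq⟩ := hE.2.1 v hvroot
  have hfu : f (m - 1) = u := (huniq _ hlast).trans (huniq u h).symm
  have hle1 : Nat.find (reach_hasPath (hE.1 u)) ≤ m - 1 :=
    Nat.find_le ⟨f, h0, hfu, fun i hi => hstep i (by omega)⟩
  set mu := Nat.find (reach_hasPath (hE.1 u)) with hmu
  obtain ⟨g, g0, gu, gstep⟩ := Nat.find_spec (reach_hasPath (hE.1 u))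
  have hle2 : m ≤ mu + 1 := by
    apply Nat.find_le
    refine ⟨fun i => if i ≤ mu then g i else v, by simp [g0], by simp, ?_⟩
    intro i hi
    rcases Nat.lt_or_ge i mu with h' | h'
    · simpa [Nat.le_of_lt h', Nat.succ_le_of_lt h'] using gstep i h'
    · have him : i = mu := by omega
      subst him
      simpa [hmu, gu] using h
  omega

lemma no_self_loop {E : Fin n → Fin n → Prop} {root : Fin n}
    (hE : IsRootedTree E root) (u : Fin n) : ¬ E u u := by
  intro h
  have := ht_edge hE h
  omega

lemma exists_leaf_desc {E : Fin n → Fin n → Prop} {root : Fin n}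
    (hE : IsRootedTree E root) (x : Fin n) :
    ∃ l, IsLeaf E l ∧ ReflTransGen E x l := by
  suffices h : ∀ N x, (Finset.univ.filter fun w => ht hE x < ht hE w).card ≤ N →
      ∃ l, IsLeaf E l ∧ ReflTransGen E x l from h _ x le_rfl
  intro N
  induction N with
  | zero =>
    intro x hx
    by_cases hleaf : IsLeaf E x
    · exact ⟨x, hleaf, ReflTransGen.refl⟩
    · exfalso
      simp only [IsLeaf] at hleaf; push_neg at hleaf
      obtain ⟨y, hy⟩ := hleaf
      have hty : ht hE y = ht hE x + 1 := ht_edge hE hy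
      have hmem : y ∈ Finset.univ.filter (fun w => ht hE x < ht hE w) := by
        simp [hty]
      have := Finset.card_pos.mpr ⟨y, hmem⟩
      omega
  | succ N ih =>
    intro x hx
    by_cases hleaf : IsLeaf E x
    · exact ⟨x, hleaf, ReflTransGen.refl⟩
    · simp only [IsLeaf] at hleaf; push_neg at hleaf
      obtain ⟨y, hy⟩ := hleaf
      have hty : ht hE y = ht hE x + 1 := ht_edge hE hy
      have hsub : (Finset.univ.filter fun w => ht hE y < ht hE w) ⊆
          (Finset.univ.filter fun w => ht hE x < ht hE w) := by
        intro w hw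
        simp only [Finset.mem_filter, Finset.mem_univ, true_and] at hw ⊢
        omega
      have hymem : y ∈ (Finset.univ.filter fun w => ht hE x < ht hE w) := by
        simp only [Finset.mem_filter, Finset.mem_univ, true_and]
        omega
      have hynot : y ∉ (Finset.univ.filter fun w => ht hE y < ht hE w) := by
        simp
      have hcard := Finset.card_lt_card
        ((Finset.ssubset_iff_of_subset hsub).mpr ⟨y, hymem, hynot⟩)
      obtain ⟨l, hl, hreach⟩ := ih y (by omega)
      exact ⟨l, hl, ReflTransGen.head hy hreach⟩

lemma anc_comp {E : Fin n → Fin n → Prop} {root : Fin n}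
    (hE : IsRootedTree E root) {w u v : Fin n}
    (hu : ReflTransGen E u w) (hv : ReflTransGen E v w) :
    ReflTransGen E u v ∨ ReflTransGen E v u := by
  suffices h : ∀ N w u v, ht hE w ≤ N → ReflTransGen E u w → ReflTransGen E v w →
      ReflTransGen E u v ∨ ReflTransGen E v u from h _ w u v le_rfl hu hv
  clear hu hv u v w
  intro N
  induction N with
  | zero =>
    intro w u v hw hu hv
    rcases hu.cases_tail with rfl | ⟨c, huc, hcw⟩
    · exact Or.inr hv
    · rcases hv.cases_tail with rfl | ⟨c', hvc, hcw'⟩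
      · exact Or.inl hu
      · exfalso
        have := ht_edge hE hcw
        omega
  | succ N ih =>
    intro w u v hw hu hv
    rcases hu.cases_tail with rfl | ⟨c, huc, hcw⟩
    · exact Or.inr hv
    · rcases hv.cases_tail with rfl | ⟨c', hvc, hcw'⟩
      · exact Or.inl hu
      · have hwroot : w ≠ root := fun hw' => hE.2.2 c (hw' ▸ hcw)
        obtain ⟨u', hu', huniq⟩ := hE.2.1 w hwroot
        have hcc : c = c' := (huniq _ hcw).trans (huniq _ hcw').symm
        subst hcc
        have := ht_edge hE hcw
        exact ih c u v (by omega) huc hvc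

/-- `S` is closed under the edges of `E`. -/
def Closed (E : Fin n → Fin n → Prop) (S : Set (Fin n)) : Prop :=
  ∀ q ∈ S, ∀ q', E q q' → q' ∈ S

lemma closed_reflTrans {E : Fin n → Fin n → Prop} {S : Set (Fin n)}
    (hS : Closed E S) {x y : Fin n} (hx : x ∈ S) (h : ReflTransGen E x y) : y ∈ S := by
  induction h with
  | refl => exact hx
  | tail _ e ih => exact hS _ ih _ e

lemma closed_root_univ {E : Fin n → Fin n → Prop} {root : Fin n}
    (hE : IsRootedTree E root) {S : Set (Fin n)} (hS : Closed E S) (hroot : root ∈ S) :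
    S = Set.univ :=
  Set.eq_univ_of_forall fun v => closed_reflTrans hS hroot (hE.1 v)

/-! ### Coverings (Finset version) -/

/-- `I` is a covering at time `r`. -/
def FCov (G : ℕ → Fin n → Fin n → Prop) (I : Finset (Fin n)) (r : ℕ) : Prop :=
  ∀ v, ∃ p ∈ I, v ∈ influence G p r

/-- `I` is a strict covering at time `r`. -/
def FStrict (G : ℕ → Fin n → Fin n → Prop) (I : Finset (Fin n)) (r : ℕ) : Prop :=
  FCov G I r ∧ ∀ p ∈ I, ¬ FCov G (I.erase p) r

lemma FCov.mono {G : ℕ → Fin n → Fin n → Prop} {I : Finset (Fin n)} {r s : ℕ}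
    (h : FCov G I r) (hrs : r ≤ s) : FCov G I s := by
  intro v
  obtain ⟨p, hp, hv⟩ := h v
  exact ⟨p, hp, influence_mono G p hrs hv⟩

lemma exists_strict_subcover {G : ℕ → Fin n → Fin n → Prop} {r : ℕ} :
    ∀ I : Finset (Fin n), FCov G I r → ∃ I' ⊆ I, FStrict G I' r := by
  intro I
  induction I using Finset.strongInductionOn with
  | _ I ih =>
    intro hcov
    by_cases h : ∀ p ∈ I, ¬ FCov G (I.erase p) r
    · exact ⟨I, subset_rfl, hcov, h⟩
    · push_neg at h
      obtain ⟨p, hp, hcov'⟩ := h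
      obtain ⟨I', hsub, hstrict⟩ := ih (I.erase p) (Finset.erase_ssubset hp) hcov'
      exact ⟨I', hsub.trans (Finset.erase_subset _ _), hstrict⟩

/-! ### Sizes and the potential function -/

/-- Size of the influence set of `p` at time `r`. -/
noncomputable def szf (G : ℕ → Fin n → Fin n → Prop) (p : Fin n) (r : ℕ) : ℕ :=
  (influence G p r).ncard

lemma szf_mono (G : ℕ → Fin n → Fin n → Prop) (p : Fin n) {r s : ℕ} (h : r ≤ s) :
    szf G p r ≤ szf G p s :=
  Set.ncard_le_ncard (influence_mono G p h) (Set.toFinite _)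

lemma szf_lt (G : ℕ → Fin n → Fin n → Prop) (p : Fin n) {r : ℕ}
    (h : influence G p (r + 1) ≠ influence G p r) :
    szf G p r + 1 ≤ szf G p (r + 1) := by
  have hss : influence G p r ⊂ influence G p (r + 1) :=
    ssubset_of_subset_of_ne (influence_subset_succ G p r) (Ne.symm h)
  have := Set.ncard_lt_ncard hss (Set.toFinite _)
  unfold szf
  omega

lemma szf_le (G : ℕ → Fin n → Fin n → Prop) (p : Fin n) {r : ℕ}
    (h : influence G p r ≠ Set.univ) : szf G p r ≤ n - 1 := by
  have hss : influence G p r ⊂ Set.univ := ssubset_of_subset_of_ne (Set.subset_univ _) h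
  have h2 := Set.ncard_lt_ncard hss (Set.toFinite _)
  have h3 : (Set.univ : Set (Fin n)).ncard = n := by
    simp [Set.ncard_univ]
  unfold szf
  omega

lemma pow_nonempty (I : Finset (Fin n)) (k : ℕ) :
    (I.powersetCard (min k I.card)).Nonempty :=
  Finset.powersetCard_nonempty.mpr (min_le_right _ _)

/-- The potential function: padded sum of the `k` smallest member sizes. -/
noncomputable def phi (G : ℕ → Fin n → Fin n → Prop) (k : ℕ) (I : Finset (Fin n)) (r : ℕ) : ℕ :=
  (k - I.card) * (n - 1) +
    (I.powersetCard (min k I.card)).inf' (pow_nonempty I k) (fun B => ∑ p ∈ B, szf G p r)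

lemma stall_closed {G : ℕ → Fin n → Fin n → Prop} {r : ℕ} {p : Fin n}
    (hstall : influence G p (r + 1) = influence G p r) :
    Closed (G (r + 1)) (influence G p r) := by
  intro q hq q' he
  have hmem : q' ∈ influence G p (r + 1) := Or.inr ⟨q, hq, he⟩
  rwa [hstall] at hmem

lemma stall_card_le {G : ℕ → Fin n → Fin n → Prop} {k r : ℕ} {ρ : Fin n}
    (hE : IsRootedTree (G (r + 1)) ρ)
    (hL : {v | IsLeaf (G (r + 1)) v}.ncard = k - 1)
    {I : Finset (Fin n)} (hI : FStrict G I r) :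
    (I.filter fun p => influence G p (r + 1) = influence G p r).card ≤ k - 1 := by
  set S := I.filter fun p => influence G p (r + 1) = influence G p r with hSdef
  have hpriv : ∀ p : Fin n, ∃ x l : Fin n, p ∈ S →
      (∀ q ∈ I, q ≠ p → x ∉ influence G q r) ∧ x ∈ influence G p r ∧
      IsLeaf (G (r + 1)) l ∧ ReflTransGen (G (r + 1)) x l ∧ l ∈ influence G p r := by
    intro p
    by_cases hp : p ∈ S
    · have hpI : p ∈ I := (Finset.mem_filter.mp hp).1
      have hstall := (Finset.mem_filter.mp hp).2
      have hnc := hI.2 p hpI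
      simp only [FCov] at hnc; push_neg at hnc
      obtain ⟨x, hx⟩ := hnc
      have hxp : x ∈ influence G p r := by
        obtain ⟨q, hq, hxq⟩ := hI.1 x
        by_cases hqp : q = p
        · rwa [hqp] at hxq
        · exact absurd hxq (hx q (Finset.mem_erase.mpr ⟨hqp, hq⟩))
      obtain ⟨l, hl, hreach⟩ := exists_leaf_desc hE x
      refine ⟨x, l, fun _ => ⟨?_, hxp, hl, hreach,
        closed_reflTrans (stall_closed hstall) hxp hreach⟩⟩
      intro q hq hqp hxq
      exact hx q (Finset.mem_erase.mpr ⟨hqp, hq⟩) hxq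
    · exact ⟨p, p, fun h => absurd h hp⟩
  choose xf lf hchoice using hpriv
  have hfin : {v | IsLeaf (G (r + 1)) v}.Finite := Set.toFinite _
  have hinj : Set.InjOn lf S := by
    intro p hp p' hp' heq
    by_contra hne
    obtain ⟨hxpriv, hxmem, _, hreach, _⟩ := hchoice p hp
    obtain ⟨hxpriv', hxmem', _, hreach', _⟩ := hchoice p' hp'
    have hpI : p ∈ I := (Finset.mem_filter.mp hp).1
    have hp'I : p' ∈ I := (Finset.mem_filter.mp hp').1
    have hstall := (Finset.mem_filter.mp hp).2
    have hstall' := (Finset.mem_filter.mp hp').2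
    rcases anc_comp hE hreach (heq ▸ hreach') with hcomp | hcomp
    · have : xf p' ∈ influence G p r :=
        closed_reflTrans (stall_closed hstall) hxmem hcomp
      exact hxpriv' p hpI hne this
    · have : xf p ∈ influence G p' r :=
        closed_reflTrans (stall_closed hstall') hxmem' hcomp
      exact hxpriv p' hp'I (Ne.symm hne) this
  have hmaps : ∀ p ∈ S, lf p ∈ hfin.toFinset := by
    intro p hp
    obtain ⟨_, _, hl, _, _⟩ := hchoice p hp
    simpa using hl
  have hcard := Finset.card_le_card_of_injOn lf hmaps hinj
  have hcard2 : hfin.toFinset.card = k - 1 := by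
    rw [← Set.ncard_eq_toFinset_card _ hfin, hL]
  omega

lemma exists_grow {G : ℕ → Fin n → Fin n → Prop} {k r : ℕ} {ρ : Fin n}
    (hE : IsRootedTree (G (r + 1)) ρ)
    (hL : {v | IsLeaf (G (r + 1)) v}.ncard = k - 1)
    {I : Finset (Fin n)} (hI : FStrict G I r) (hk : 1 ≤ k)
    (hnofull : ∀ p, influence G p (r + 1) ≠ Set.univ)
    {B : Finset (Fin n)} (hB : B ∈ I.powersetCard (min k I.card)) :
    ∃ p ∈ B, szf G p r + 1 ≤ szf G p (r + 1) := by
  obtain ⟨hBI, hBcard⟩ := Finset.mem_powersetCard.mp hB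
  rcases Nat.lt_or_ge I.card k with hlt | hge
  · have hBeq : B = I := Finset.eq_of_subset_of_card_le hBI (by omega)
    subst hBeq
    obtain ⟨p, hp, hρ⟩ := hI.1 ρ
    refine ⟨p, hp, szf_lt G p ?_⟩
    intro hstall
    have huniv := closed_root_univ hE (stall_closed hstall) hρ
    exact hnofull p (Set.eq_univ_of_univ_subset
      (huniv ▸ influence_subset_succ G p r))
  · by_contra hno
    push_neg at hno
    have hall : B ⊆ I.filter fun p => influence G p (r + 1) = influence G p r := by
      intro p hp
      refine Finset.mem_filter.mpr ⟨hBI hp, ?_⟩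
      by_contra hne
      have := szf_lt G p hne
      have := hno p hp
      omega
    have h1 := Finset.card_le_card hall
    have h2 := stall_card_le hE hL hI
    omega

lemma phi_succ {G : ℕ → Fin n → Fin n → Prop} {k r : ℕ} {ρ : Fin n}
    (hE : IsRootedTree (G (r + 1)) ρ)
    (hL : {v | IsLeaf (G (r + 1)) v}.ncard = k - 1)
    {I : Finset (Fin n)} (hI : FStrict G I r) (hk : 1 ≤ k)
    (hnofull : ∀ p, influence G p (r + 1) ≠ Set.univ) :
    phi G k I r + 1 ≤ phi G k I (r + 1) := by
  unfold phi
  obtain ⟨B, hB, hEq⟩ := Finset.exists_mem_eq_inf' (pow_nonempty I k)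
    (fun B => ∑ p ∈ B, szf G p (r + 1))
  obtain ⟨p, hp, hgrow⟩ := exists_grow hE hL hI hk hnofull hB
  have h1 : (∑ p ∈ B, szf G p r) < ∑ p ∈ B, szf G p (r + 1) :=
    Finset.sum_lt_sum (fun i _ => szf_mono G i (Nat.le_succ r)) ⟨p, hp, by omega⟩
  have h2 : (I.powersetCard (min k I.card)).inf' (pow_nonempty I k)
      (fun B => ∑ p ∈ B, szf G p r) ≤ ∑ p ∈ B, szf G p r :=
    Finset.inf'_le _ hB
  rw [hEq]
  omega

lemma phi_subset {G : ℕ → Fin n → Fin n → Prop} {k t : ℕ}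
    {I' I : Finset (Fin n)} (hsub : I' ⊆ I)
    (hsz : ∀ p, szf G p t ≤ n - 1) : phi G k I t ≤ phi G k I' t := by
  unfold phi
  obtain ⟨B', hB', hEq'⟩ := Finset.exists_mem_eq_inf' (pow_nonempty I' k)
    (fun B => ∑ p ∈ B, szf G p t)
  obtain ⟨hB'I', hB'card⟩ := Finset.mem_powersetCard.mp hB'
  have hcard_mono : I'.card ≤ I.card := Finset.card_le_card hsub
  obtain ⟨B, hB'B, hBI, hBcard⟩ :=
    Finset.exists_subsuperset_card_eq (n := min k I.card) (hB'I'.trans hsub)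
      (by omega) (min_le_right _ _)
  have hinfle : (I.powersetCard (min k I.card)).inf' (pow_nonempty I k)
      (fun B => ∑ p ∈ B, szf G p t) ≤ ∑ p ∈ B, szf G p t :=
    Finset.inf'_le _ (Finset.mem_powersetCard.mpr ⟨hBI, hBcard⟩)
  have hsdiff : ∑ p ∈ B \ B', szf G p t ≤ (B \ B').card * (n - 1) := by
    have := Finset.sum_le_card_nsmul (B \ B') (fun p => szf G p t) (n - 1)
      (fun x _ => hsz x)
    simpa using this
  have hsplit : (∑ p ∈ B \ B', szf G p t) + ∑ p ∈ B', szf G p t = ∑ p ∈ B, szf G p t :=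
    Finset.sum_sdiff hB'B
  have hcsd : (B \ B').card = min k I.card - min k I'.card := by
    rw [Finset.card_sdiff_of_subset hB'B, hBcard, hB'card]
  have harith : (k - I.card) + (min k I.card - min k I'.card) ≤ k - I'.card := by
    omega
  rw [hEq']
  calc (k - I.card) * (n - 1) + (I.powersetCard (min k I.card)).inf'
        (pow_nonempty I k) (fun B => ∑ p ∈ B, szf G p t)
      ≤ (k - I.card) * (n - 1) +
        ((min k I.card - min k I'.card) * (n - 1) + ∑ p ∈ B', szf G p t) := by
        have : (I.powersetCard (min k I.card)).inf' (pow_nonempty I k)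
            (fun B => ∑ p ∈ B, szf G p t) ≤
            (min k I.card - min k I'.card) * (n - 1) + ∑ p ∈ B', szf G p t := by
          rw [← hcsd]
          omega
        omega
    _ = ((k - I.card) + (min k I.card - min k I'.card)) * (n - 1) +
        ∑ p ∈ B', szf G p t := by ring
    _ ≤ (k - I'.card) * (n - 1) + ∑ p ∈ B', szf G p t :=
        Nat.add_le_add_right (Nat.mul_le_mul_right _ harith) _

lemma phi_lower {G : ℕ → Fin n → Fin n → Prop} {k t : ℕ}
    {I : Finset (Fin n)} (hn : 3 ≤ n) (hsz2 : ∀ p ∈ I, 2 ≤ szf G p t) :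
    2 * k ≤ phi G k I t := by
  unfold phi
  have h1 : 2 * min k I.card ≤ (I.powersetCard (min k I.card)).inf'
      (pow_nonempty I k) (fun B => ∑ p ∈ B, szf G p t) := by
    apply Finset.le_inf'
    intro B hB
    obtain ⟨hBI, hBcard⟩ := Finset.mem_powersetCard.mp hB
    have := Finset.card_nsmul_le_sum B (fun p => szf G p t) 2
      (fun x hx => hsz2 x (hBI hx))
    simp only [smul_eq_mul] at this
    omega
  have h2 : 2 * (k - I.card) ≤ (k - I.card) * (n - 1) := by
    have := Nat.mul_le_mul_left (k - I.card) (show 2 ≤ n - 1 by omega)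
    omega
  omega

lemma phi_upper {G : ℕ → Fin n → Fin n → Prop} {k t : ℕ}
    {I : Finset (Fin n)} (hsz : ∀ p, szf G p t ≤ n - 1) :
    phi G k I t ≤ k * (n - 1) := by
  unfold phi
  obtain ⟨B, hB, hEq⟩ := Finset.exists_mem_eq_inf' (pow_nonempty I k)
    (fun B => ∑ p ∈ B, szf G p t)
  obtain ⟨hBI, hBcard⟩ := Finset.mem_powersetCard.mp hB
  have h1 : ∑ p ∈ B, szf G p t ≤ B.card * (n - 1) := by
    have := Finset.sum_le_card_nsmul B (fun p => szf G p t) (n - 1)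
      (fun x _ => hsz x)
    simpa using this
  rw [hEq]
  have harith : (k - I.card) + min k I.card ≤ k := by omega
  calc (k - I.card) * (n - 1) + ∑ p ∈ B, szf G p t
      ≤ (k - I.card) * (n - 1) + min k I.card * (n - 1) := by
        rw [hBcard] at h1; omega
    _ = ((k - I.card) + min k I.card) * (n - 1) := by ring
    _ ≤ k * (n - 1) := Nat.mul_le_mul_right _ harith

end Aux

/-! ### Base covering and main theorem -/

lemma base_cover {n : ℕ} {G : ℕ → Fin n → Fin n → Prop} {ρ : Fin n}
    (hE : IsRootedTree (G 1) ρ) (hn : 2 ≤ n) :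
    ∃ I : Finset (Fin n), FCov G I 1 ∧ ∀ p ∈ I, 2 ≤ szf G p 1 := by
  classical
  refine ⟨Finset.univ.filter fun p => ¬ IsLeaf (G 1) p, ?_, ?_⟩
  · intro v
    by_cases hv : v = ρ
    · have hw : ∃ w : Fin n, w ≠ ρ := by
        by_cases h0 : (⟨0, by omega⟩ : Fin n) = ρ
        · exact ⟨⟨1, by omega⟩, fun h1 => by
            rw [← h1] at h0
            simp [Fin.ext_iff] at h0⟩
        · exact ⟨⟨0, by omega⟩, h0⟩
      obtain ⟨w, hwρ⟩ := hw
      rcases (hE.1 w).cases_head with heq | ⟨c, hc, _⟩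
      · exact absurd heq.symm hwρ
      · exact ⟨ρ, Finset.mem_filter.mpr ⟨Finset.mem_univ _, fun hleaf => hleaf c hc⟩,
          hv ▸ mem_influence_self G ρ 1⟩
    · obtain ⟨u, hu, _⟩ := hE.2.1 v hv
      refine ⟨u, Finset.mem_filter.mpr ⟨Finset.mem_univ _, fun hleaf => hleaf v hu⟩, ?_⟩
      exact Or.inr ⟨u, rfl, hu⟩
  · intro p hp
    have hpl := (Finset.mem_filter.mp hp).2
    simp only [IsLeaf] at hpl; push_neg at hpl
    obtain ⟨c, hc⟩ := hpl
    have hcp : c ≠ p := by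
      intro h
      exact no_self_loop hE p (h ▸ hc)
    have hsub : ({p, c} : Set (Fin n)) ⊆ influence G p 1 := by
      intro x hx
      rcases hx with rfl | rfl
      · exact mem_influence_self G x 1
      · exact Or.inr ⟨p, rfl, hc⟩
    have h2 : ({p, c} : Set (Fin n)).ncard = 2 := Set.ncard_pair (Ne.symm hcp)
    have := Set.ncard_le_ncard hsub (Set.toFinite _)
    unfold szf
    omega

/-- for rooted trees with exactly `k-1` leaves, dissemination
completes within `k(n-3)+2` rounds. -/
theorem dissemination_trees_k_minus_one_leaves {n k : ℕ}
    (G : ℕ → Fin n → Fin n → Prop)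
    (htree : ∀ r, 1 ≤ r → ∃ root, IsRootedTree (G r) root ∧
      {v | IsLeaf (G r) v}.ncard = k - 1) :
    ∃ p : Fin n, influence G p (k * (n - 3) + 2) = Set.univ := by
  classical
  rcases Nat.lt_or_ge n 3 with hn3 | hn3
  · have hn : n = 0 ∨ n = 1 ∨ n = 2 := by omega
    rcases hn with rfl | rfl | rfl
    · obtain ⟨root, _⟩ := htree 1 le_rfl
      exact root.elim0
    · refine ⟨⟨0, one_pos⟩, Set.eq_univ_of_forall fun x => ?_⟩
      have hx : x = ⟨0, one_pos⟩ := Subsingleton.elim _ _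
      rw [hx]
      exact mem_influence_self G _ _
    · obtain ⟨ρ, hE, _⟩ := htree 1 le_rfl
      have hw : ∃ w : Fin 2, w ≠ ρ := by
        by_cases h0 : (0 : Fin 2) = ρ
        · exact ⟨1, fun h1 => by rw [← h1] at h0; simp at h0⟩
        · exact ⟨0, h0⟩
      obtain ⟨w, hwρ⟩ := hw
      rcases (hE.1 w).cases_head with heq | ⟨c, hc, _⟩
      · exact absurd heq.symm hwρ
      · refine ⟨ρ, Set.eq_univ_of_forall fun x => ?_⟩
        have hcρ : c ≠ ρ := fun h => hE.2.2 ρ (h ▸ hc)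
        have hmem1 : ρ ∈ influence G ρ (k * (2 - 3) + 2) := mem_influence_self G _ _
        have hmemc : c ∈ influence G ρ (k * (2 - 3) + 2) := by
          apply influence_mono G ρ (show 1 ≤ k * (2 - 3) + 2 by omega)
          exact Or.inr ⟨ρ, rfl, hc⟩
        have : x = ρ ∨ x = c := by
          have h1 := x.isLt
          have h2 := ρ.isLt
          have h3 := c.isLt
          have h4 : (c : ℕ) ≠ (ρ : ℕ) := fun h => hcρ (Fin.ext h)
          simp only [Fin.ext_iff]
          omega
        rcases this with rfl | rfl
        · exact hmem1
        · exact hmemc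
  · by_contra hcon
    push_neg at hcon
    set T := k * (n - 3) + 2 with hT
    have hnofullr : ∀ r ≤ T, ∀ p, influence G p r ≠ Set.univ := by
      intro r hr p heq
      exact hcon p (Set.eq_univ_of_univ_subset (heq ▸ influence_mono G p hr))
    obtain ⟨ρ1, hE1, hL1⟩ := htree 1 le_rfl
    have hk2 : 2 ≤ k := by
      obtain ⟨l, hl, _⟩ := exists_leaf_desc hE1 ρ1
      have hpos : 0 < {v | IsLeaf (G 1) v}.ncard :=
        (Set.ncard_pos (Set.toFinite _)).mpr ⟨l, hl⟩
      omega
    have key : ∀ j, j + 1 ≤ T →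
        ∃ I : Finset (Fin n), FStrict G I (j + 1) ∧ 2 * k + j ≤ phi G k I (j + 1) := by
      intro j
      induction j with
      | zero =>
        intro _
        obtain ⟨I0, hcov, hsz2⟩ := base_cover hE1 (by omega)
        obtain ⟨I', hsub, hstrict⟩ := exists_strict_subcover I0 hcov
        exact ⟨I', hstrict, by simpa using phi_lower hn3 (fun p hp => hsz2 p (hsub hp))⟩
      | succ j ih =>
        intro hj
        obtain ⟨I, hstrict, hphi⟩ := ih (by omega)
        obtain ⟨ρ', hE', hL'⟩ := htree (j + 2) (by omega)
        have hnofull : ∀ p, influence G p (j + 2) ≠ Set.univ := hnofullr (j + 2) (by omega)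
        have hstep := phi_succ hE' hL' hstrict (by omega) hnofull
        have hcov2 : FCov G I (j + 2) := hstrict.1.mono (Nat.le_succ _)
        obtain ⟨I', hsub, hstrict'⟩ := exists_strict_subcover I hcov2
        have hmono := phi_subset (G := G) (k := k) (t := j + 2) hsub
          (fun p => szf_le G p (hnofull p))
        have hstep' : phi G k I (j + 1) + 1 ≤ phi G k I (j + 2) := hstep
        have hgoal : 2 * k + (j + 1) ≤ phi G k I' (j + 2) := by omega
        exact ⟨I', hstrict', hgoal⟩
    obtain ⟨I, hstrict, hphi⟩ := key (T - 1) (by omega)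
    have hT1 : T - 1 + 1 = T := by omega
    rw [hT1] at hstrict hphi
    have hupper := phi_upper (G := G) (k := k) (I := I) (t := T)
      (fun p => szf_le G p (hnofullr T le_rfl p))
    have harith : k * (n - 3) + 2 * k = k * (n - 1) := by
      have h31 : n - 3 + 2 = n - 1 := by omega
      calc k * (n - 3) + 2 * k = k * ((n - 3) + 2) := by ring
        _ = k * (n - 1) := by rw [h31]
    omega
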